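/- For q ∈ L¹[0,1] with ∫₀¹ q = 0, the integral ∫₀¹ (Q(x,n) − Q₀(n))² e^{−8πinx} dx is o(1/n) as n → ∞, where Q(x,n) = ∫₀ˣ q(t)e^{4πint} dt − q_{−2n}x and Q₀(n) is its mean over [0,1]. -/

import Mathlib

open MeasureTheory Filter Set

lemma triangle_swap (g e : ℝ → ℂ) (a b : ℝ)
    (hg : IntegrableOn g (Set.Ioc a b)) (he : IntegrableOn e (Set.Ioc a b)) :
    ∫ x in Set.Ioc a b, e x * ∫ t in Set.Ioc a x, g t
      = ∫ t in Set.Ioc a b, g t * ∫ x in Set.Ioc t b, e x := by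
  set μ := volume.restrict (Set.Ioc a b) with hμ
  have hset : MeasurableSet {p : ℝ × ℝ | p.2 ≤ p.1} :=
    measurableSet_le measurable_snd measurable_fst
  have hint : Integrable (Function.uncurry fun x t => if t ≤ x then e x * g t else 0)
      (μ.prod μ) := by
    have : (Function.uncurry fun x t => if t ≤ x then e x * g t else 0)
        = {p : ℝ × ℝ | p.2 ≤ p.1}.indicator (fun p => e p.1 * g p.2) := by
      funext p
      simp [Function.uncurry, Set.indicator_apply]
    rw [this]
    exact (he.mul_prod hg).indicator hset
  have hswap := integral_integral_swap hint
  have hL : ∀ x ∈ Set.Ioc a b,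
      (∫ t, (if t ≤ x then e x * g t else 0) ∂μ) = e x * ∫ t in Set.Ioc a x, g t := by
    intro x hx
    have h1 : (fun t => if t ≤ x then e x * g t else 0)
        = (Set.Iic x).indicator (fun t => e x * g t) := by
      funext t; simp [Set.indicator_apply]
    rw [h1, integral_indicator measurableSet_Iic, hμ,
      Measure.restrict_restrict measurableSet_Iic]
    have h2 : Set.Iic x ∩ Set.Ioc a b = Set.Ioc a x := by
      ext t
      simp only [Set.mem_inter_iff, Set.mem_Iic, Set.mem_Ioc]
      exact ⟨fun ⟨h1, h2, _⟩ => ⟨h2, h1⟩, fun ⟨h1, h2⟩ => ⟨h2, h1, h2.trans hx.2⟩⟩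
    rw [h2, integral_const_mul]
  have hR : ∀ t ∈ Set.Ioc a b,
      (∫ x, (if t ≤ x then e x * g t else 0) ∂μ) = g t * ∫ x in Set.Ioc t b, e x := by
    intro t ht
    have h1 : (fun x => if t ≤ x then e x * g t else 0)
        = (Set.Ici t).indicator (fun x => e x * g t) := by
      funext x; simp [Set.indicator_apply]
    rw [h1, integral_indicator measurableSet_Ici, hμ,
      Measure.restrict_restrict measurableSet_Ici]
    have h2 : Set.Ici t ∩ Set.Ioc a b = Set.Icc t b := by
      ext x
      simp only [Set.mem_inter_iff, Set.mem_Ici, Set.mem_Icc, Set.mem_Ioc]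
      exact ⟨fun ⟨h1, _, h3⟩ => ⟨h1, h3⟩, fun ⟨h1, h2⟩ => ⟨h1, ht.1.trans_le h1, h2⟩⟩
    rw [h2, integral_Icc_eq_integral_Ioc, integral_mul_const, mul_comm]
  calc ∫ x in Set.Ioc a b, e x * ∫ t in Set.Ioc a x, g t
      = ∫ x, (∫ t, (if t ≤ x then e x * g t else 0) ∂μ) ∂μ :=
        (setIntegral_congr_fun measurableSet_Ioc hL).symm
    _ = ∫ t, (∫ x, (if t ≤ x then e x * g t else 0) ∂μ) ∂μ := hswap
    _ = ∫ t in Set.Ioc a b, g t * ∫ x in Set.Ioc t b, e x :=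
        setIntegral_congr_fun measurableSet_Ioc hR

lemma sq_integral_aux (g : ℝ → ℂ) (x : ℝ) (hg : IntegrableOn g (Set.Icc 0 x)) :
    (∫ t in Set.Ioc (0:ℝ) x, g t)^2
      = 2 * ∫ t in Set.Ioc (0:ℝ) x, g t * ∫ s in Set.Ioc (0:ℝ) t, g s := by
  have hg' : IntegrableOn g (Set.Ioc 0 x) := hg.mono_set Set.Ioc_subset_Icc_self
  have hswap := triangle_swap g g 0 x hg' hg'
  have hcongr : ∀ t ∈ Set.Ioc (0:ℝ) x,
      g t * ∫ s in Set.Ioc t x, g s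
        = g t * (∫ s in Set.Ioc (0:ℝ) x, g s) - g t * ∫ s in Set.Ioc (0:ℝ) t, g s := by
    intro t ht
    have hsplit : ∫ s in Set.Ioc (0:ℝ) x, g s
        = (∫ s in Set.Ioc (0:ℝ) t, g s) + ∫ s in Set.Ioc t x, g s := by
      rw [← setIntegral_union (Set.Ioc_disjoint_Ioc_of_le le_rfl) measurableSet_Ioc
        (hg'.mono_set (Set.Ioc_subset_Ioc_right ht.2))
        (hg'.mono_set (Set.Ioc_subset_Ioc_left ht.1.le)),
        Set.Ioc_union_Ioc_eq_Ioc ht.1.le ht.2]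
    rw [hsplit]; ring
  rw [setIntegral_congr_fun measurableSet_Ioc hcongr] at hswap
  have hucont : ContinuousOn (fun t => ∫ s in Set.Ioc (0:ℝ) t, g s) (Set.Icc 0 x) :=
    intervalIntegral.continuousOn_primitive hg
  have hgu : IntegrableOn (fun t => g t * ∫ s in Set.Ioc (0:ℝ) t, g s) (Set.Ioc 0 x) :=
    (hg.mul_continuousOn hucont isCompact_Icc).mono_set Set.Ioc_subset_Icc_self
  rw [integral_sub (hg'.mul_const _) hgu, integral_mul_const] at hswap
  linear_combination -hswap

theorem integral_Qxn_sq_isLittleO (q : ℝ → ℝ)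
    (hq : IntegrableOn q (Set.Icc 0 1))
    (h0 : ∫ x in (0:ℝ)..1, q x = 0)
    (Q : ℕ → ℝ → ℂ)
    (hQ : ∀ n : ℕ, ∀ x : ℝ, Q n x =
      (∫ t in (0:ℝ)..x, (q t : ℂ) * Complex.exp ((4 * Real.pi * (n : ℝ) * t) * Complex.I))
        - (∫ t in (0:ℝ)..1, (q t : ℂ) * Complex.exp ((4 * Real.pi * (n : ℝ) * t) * Complex.I)) * (x : ℂ))
    (Q0 : ℕ → ℂ) (hQ0 : ∀ n : ℕ, Q0 n = ∫ x in (0:ℝ)..1, Q n x) :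
    Tendsto (fun n : ℕ => (n : ℂ) *
      ∫ x in (0:ℝ)..1, (Q n x - Q0 n)^2 * Complex.exp (-(8 * Real.pi * (n : ℝ) * x) * Complex.I))
      atTop (nhds 0) := by
  set f : ℕ → ℝ → ℂ := fun n t => (q t : ℂ) * Complex.exp ((4 * Real.pi * (n : ℝ) * t) * Complex.I)
    with hf
  set en : ℕ → ℝ → ℂ := fun n x => Complex.exp (-(8 * Real.pi * (n : ℝ) * x) * Complex.I) with hen
  set C : ℝ := ∫ t in Set.Ioc (0:ℝ) 1, |q t| with hC
  -- basic facts
  have hqIcc : IntegrableOn (fun t => (q t : ℂ)) (Set.Icc 0 1) := hq.ofReal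
  have hqIoc : IntegrableOn (fun t => |q t|) (Set.Ioc 0 1) :=
    (hq.mono_set Set.Ioc_subset_Icc_self).abs
  have hCnn : (0:ℝ) ≤ C := setIntegral_nonneg measurableSet_Ioc fun t _ => abs_nonneg _
  have hfcont : ∀ n : ℕ, Continuous fun t : ℝ =>
      Complex.exp ((4 * Real.pi * (n : ℝ) * t) * Complex.I) := by
    intro n; fun_prop
  have hencont : ∀ n : ℕ, Continuous (en n) := by
    intro n; rw [hen]; fun_prop
  have hfnorm : ∀ (n : ℕ) (t : ℝ),
      ‖Complex.exp ((4 * Real.pi * (n : ℝ) * t) * Complex.I)‖ = 1 := by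
    intro n t
    rw [show ((4 : ℂ) * Real.pi * (n : ℝ) * t) * Complex.I
        = ((4 * Real.pi * (n : ℝ) * t : ℝ) : ℂ) * Complex.I by push_cast; ring,
      Complex.norm_exp_ofReal_mul_I]
  have hennorm : ∀ (n : ℕ) (t : ℝ), ‖en n t‖ = 1 := by
    intro n t
    simp only [hen]
    rw [show (-(8 * (Real.pi:ℂ) * (n : ℝ) * t)) * Complex.I
        = ((-(8 * Real.pi * (n : ℝ) * t) : ℝ) : ℂ) * Complex.I by push_cast; ring,
      Complex.norm_exp_ofReal_mul_I]
  have hfabs : ∀ (n : ℕ) (t : ℝ), ‖f n t‖ = |q t| := by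
    intro n t
    simp only [hf]
    simp only [norm_mul, hfnorm n t, mul_one, Complex.norm_real, Real.norm_eq_abs]
  have hfi : ∀ n : ℕ, IntegrableOn (f n) (Set.Icc 0 1) := by
    intro n
    have h := hqIcc.bdd_mul (((hfcont n).aestronglyMeasurable).restrict)
      (c := 1) (Eventually.of_forall fun t => le_of_eq (hfnorm n t))
    have he : f n = fun t : ℝ => Complex.exp ((4 * Real.pi * (n : ℝ) * t) * Complex.I) * (q t : ℂ) := by
      funext t; rw [hf]; ring
    rw [he]; exact h
  -- partial integrals bounded by C
  have hGb : ∀ (n : ℕ), ∀ x ∈ Set.Icc (0:ℝ) 1, ‖∫ t in Set.Ioc 0 x, f n t‖ ≤ C := by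
    intro n x hx
    calc ‖∫ t in Set.Ioc 0 x, f n t‖ ≤ ∫ t in Set.Ioc 0 x, ‖f n t‖ :=
          norm_integral_le_integral_norm _
      _ = ∫ t in Set.Ioc 0 x, |q t| :=
          setIntegral_congr_fun measurableSet_Ioc fun t _ => hfabs n t
      _ ≤ C := by
          rw [hC]
          exact setIntegral_mono_set hqIoc (Eventually.of_forall fun t => abs_nonneg _)
            ((Set.Ioc_subset_Ioc_right hx.2).eventuallyLE)
  have hG1eq : ∀ n : ℕ, (∫ t in (0:ℝ)..1, f n t) = ∫ t in Set.Ioc (0:ℝ) 1, f n t := fun n =>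
    intervalIntegral.integral_of_le zero_le_one
  -- Q in terms of g
  set G1 : ℕ → ℂ := fun n => ∫ t in Set.Ioc (0:ℝ) 1, f n t with hG1
  set g : ℕ → ℝ → ℂ := fun n t => f n t - G1 n with hg
  have hG1b : ∀ n : ℕ, ‖G1 n‖ ≤ C := fun n => hGb n 1 ⟨zero_le_one, le_refl 1⟩
  have hgi : ∀ n : ℕ, IntegrableOn (g n) (Set.Icc 0 1) := by
    intro n
    exact (hfi n).sub (integrableOn_const measure_Icc_lt_top.ne)
  have hgb : ∀ (n : ℕ) (t : ℝ), ‖g n t‖ ≤ |q t| + C := by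
    intro n t
    simp only [hg]
    calc ‖f n t - G1 n‖ ≤ ‖f n t‖ + ‖G1 n‖ := norm_sub_le _ _
      _ ≤ |q t| + C := by rw [hfabs n t]; exact add_le_add_right (hG1b n) _
  have hQset : ∀ n : ℕ, ∀ x ∈ Set.Icc (0:ℝ) 1, Q n x = ∫ t in Set.Ioc 0 x, g n t := by
    intro n x hx
    have hsub : Set.Ioc 0 x ⊆ Set.Icc (0:ℝ) 1 := fun t ht => ⟨ht.1.le, ht.2.trans hx.2⟩
    rw [hQ n x, intervalIntegral.integral_of_le hx.1, intervalIntegral.integral_of_le zero_le_one]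
    simp only [hg, hG1, hf]
    rw [integral_sub ((hfi n).mono_set hsub) (integrableOn_const measure_Ioc_lt_top.ne),
      setIntegral_const, Real.volume_real_Ioc_of_le hx.1, sub_zero,
      Complex.real_smul]
    simp only [hf]
    ring
  have hQcont : ∀ n : ℕ, ContinuousOn (Q n) (Set.Icc 0 1) := by
    intro n
    exact (intervalIntegral.continuousOn_primitive (hgi n)).congr (hQset n)
  have hCi : IntegrableOn (fun _ : ℝ => C) (Set.Ioc 0 1) :=
    integrableOn_const measure_Ioc_lt_top.ne
  have hqC : ∫ t in Set.Ioc (0:ℝ) 1, (|q t| + C) = 2 * C := by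
    rw [integral_add hqIoc hCi, setIntegral_const, Real.volume_real_Ioc_of_le zero_le_one, sub_zero,
      one_smul, ← hC]
    ring
  have hQb : ∀ n : ℕ, ∀ x ∈ Set.Icc (0:ℝ) 1, ‖Q n x‖ ≤ 2 * C := by
    intro n x hx
    rw [hQset n x hx]
    calc ‖∫ t in Set.Ioc 0 x, g n t‖ ≤ ∫ t in Set.Ioc 0 x, ‖g n t‖ :=
          norm_integral_le_integral_norm _
      _ ≤ ∫ t in Set.Ioc (0:ℝ) 1, ‖g n t‖ :=
          setIntegral_mono_set (((hgi n).mono_set Set.Ioc_subset_Icc_self).norm)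
            (Eventually.of_forall fun t => norm_nonneg _)
            ((Set.Ioc_subset_Ioc_right hx.2).eventuallyLE)
      _ ≤ ∫ t in Set.Ioc (0:ℝ) 1, (|q t| + C) :=
          setIntegral_mono_on (((hgi n).mono_set Set.Ioc_subset_Icc_self).norm)
            (hqIoc.add hCi) measurableSet_Ioc (fun t _ => hgb n t)
      _ = 2 * C := hqC
  have hQ0b : ∀ n : ℕ, ‖Q0 n‖ ≤ 2 * C := by
    intro n
    rw [hQ0 n, intervalIntegral.integral_of_le zero_le_one]
    have h := norm_setIntegral_le_of_norm_le_const (C := 2 * C) (μ := volume)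
      (measure_Ioc_lt_top)
      (f := Q n) (fun x hx => hQb n x ⟨hx.1.le, hx.2⟩)
    simpa [Real.volume_real_Ioc] using h
  -- Riemann-Lebesgue
  have hRL : ∀ x ∈ Set.Icc (0:ℝ) 1,
      Tendsto (fun n : ℕ => ∫ t in Set.Ioc 0 x, f n t) atTop (nhds 0) := by
    intro x hx
    have hmap : Tendsto (fun k : ℕ => -((2:ℝ) * k)) atTop (cocompact ℝ) := by
      rw [cocompact_eq_atBot_atTop]
      have h1 : Tendsto (fun k : ℕ => (2:ℝ) * k) atTop atTop :=
        Tendsto.const_mul_atTop two_pos tendsto_natCast_atTop_atTop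
      exact (tendsto_neg_atBot_iff.mpr h1).mono_right le_sup_left
    have hcc := (Real.tendsto_integral_exp_smul_cocompact
      ((Set.Ioc (0:ℝ) x).indicator fun t => (q t : ℂ))).comp hmap
    refine hcc.congr fun k => ?_
    show (∫ v : ℝ, Real.fourierChar (-(v * -((2:ℝ) * k))) •
        (Set.Ioc (0:ℝ) x).indicator (fun t => (q t : ℂ)) v) = _
    have h1 : (fun v : ℝ => Real.fourierChar (-(v * -((2:ℝ) * k))) •
        (Set.Ioc (0:ℝ) x).indicator (fun t => (q t : ℂ)) v)
        = (Set.Ioc (0:ℝ) x).indicator (fun v => f k v) := by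
      funext v
      by_cases hv : v ∈ Set.Ioc (0:ℝ) x
      · rw [Set.indicator_of_mem hv, Set.indicator_of_mem hv]
        simp only [hf]
        rw [Circle.smul_def, Real.fourierChar_apply, smul_eq_mul]
        rw [show ((2 * Real.pi * -(v * -(2 * (k:ℝ))) : ℝ) : ℂ)
          = 4 * (Real.pi : ℂ) * ((k:ℝ) : ℂ) * (v : ℂ) by push_cast; ring]
        ring
      · rw [Set.indicator_of_notMem hv, Set.indicator_of_notMem hv, smul_zero]
    rw [h1, integral_indicator measurableSet_Ioc]
  have hQlim : ∀ x ∈ Set.Icc (0:ℝ) 1, Tendsto (fun n : ℕ => Q n x) atTop (nhds 0) := by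
    intro x hx
    have heq : ∀ n : ℕ, Q n x = (∫ t in Set.Ioc 0 x, f n t) - (∫ t in Set.Ioc (0:ℝ) 1, f n t) * x := by
      intro n
      rw [hQ n x, intervalIntegral.integral_of_le hx.1, intervalIntegral.integral_of_le zero_le_one]
    rw [tendsto_congr heq]
    have := (hRL x hx).sub ((hRL 1 ⟨zero_le_one, le_refl 1⟩).mul_const (x:ℂ))
    simpa using this
  have hQ0lim : Tendsto Q0 atTop (nhds 0) := by
    have heq : ∀ n : ℕ, Q0 n = ∫ x in Set.Ioc (0:ℝ) 1, Q n x := by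
      intro n; rw [hQ0 n, intervalIntegral.integral_of_le zero_le_one]
    rw [show (0:ℂ) = ∫ _ in Set.Ioc (0:ℝ) 1, (0:ℂ) by simp]
    rw [tendsto_congr heq]
    apply tendsto_integral_filter_of_dominated_convergence (fun _ => 2 * C)
    · exact Eventually.of_forall fun n =>
        ((hQcont n).aestronglyMeasurable measurableSet_Icc).mono_measure
          (Measure.restrict_mono Set.Ioc_subset_Icc_self le_rfl)
    · exact Eventually.of_forall fun n =>
        (ae_restrict_mem measurableSet_Ioc).mono fun x hx =>
          hQb n x ⟨hx.1.le, hx.2⟩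
    · exact integrableOn_const measure_Ioc_lt_top.ne
    · exact (ae_restrict_mem measurableSet_Ioc).mono fun x hx =>
        hQlim x ⟨hx.1.le, hx.2⟩
  -- the integrand h and its integrability
  have hhi : ∀ n : ℕ, IntegrableOn (fun t => 2 * g n t * (Q n t - Q0 n)) (Set.Icc 0 1) := by
    intro n
    exact IntegrableOn.mul_continuousOn ((hgi n).const_mul 2)
      ((hQcont n).sub continuousOn_const) isCompact_Icc
  have hJint : ∀ n : ℕ,
      IntegrableOn (fun t => 2 * g n t * (Q n t - Q0 n) * (1 - en n t)) (Set.Icc 0 1) := by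
    intro n
    exact IntegrableOn.mul_continuousOn (hhi n)
      (continuousOn_const.sub (hencont n).continuousOn) isCompact_Icc
  -- key identity
  set K : ℂ := -(((8 * Real.pi : ℝ) : ℂ) * Complex.I)⁻¹ with hK
  have key : ∀ n : ℕ, 1 ≤ n →
      (n : ℂ) * (∫ x in (0:ℝ)..1, (Q n x - Q0 n)^2 * en n x)
        = K * ∫ t in Set.Ioc (0:ℝ) 1, 2 * g n t * (Q n t - Q0 n) * (1 - en n t) := by
    intro n hn
    have hn0 : ((n:ℕ) : ℂ) ≠ 0 := Nat.cast_ne_zero.2 (by omega)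
    have hπ0 : (Real.pi : ℂ) ≠ 0 := by exact_mod_cast Real.pi_ne_zero
    set c : ℂ := ((-(8 * Real.pi * (n:ℝ)) : ℝ) : ℂ) * Complex.I with hc
    have hc0 : c ≠ 0 := by
      rw [hc]
      refine mul_ne_zero (Complex.ofReal_ne_zero.2 ?_) Complex.I_ne_zero
      have : (0:ℝ) < 8 * Real.pi * (n:ℝ) := by
        have := Real.pi_pos
        have hn' : (1:ℝ) ≤ (n:ℝ) := by exact_mod_cast hn
        nlinarith
      linarith
    have hexp : ∀ x : ℝ, en n x = Complex.exp (c * x) := by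
      intro x; simp only [hen, hc]; congr 1; push_cast; ring
    have hexpc : Complex.exp c = 1 := by
      rw [show c = ((-4 * (n:ℤ) : ℤ) : ℂ) * (2 * Real.pi * Complex.I) by
        rw [hc]; push_cast; ring]
      exact Complex.exp_int_mul_two_pi_mul_I _
    have hinte : ∀ t ∈ Set.Icc (0:ℝ) 1, ∫ x in Set.Ioc t 1, en n x = (1 - en n t) / c := by
      intro t ht
      rw [← intervalIntegral.integral_of_le ht.2]
      calc ∫ x in t..1, en n x = ∫ x in t..1, Complex.exp (c * x) :=
            intervalIntegral.integral_congr fun x _ => hexp x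
        _ = (Complex.exp (c * 1) - Complex.exp (c * t)) / c := integral_exp_mul_complex hc0
        _ = (1 - en n t) / c := by rw [mul_one, hexpc, hexp t]
    have hen0 : en n 0 = 1 := by
      rw [hexp 0]; push_cast; rw [mul_zero, Complex.exp_zero]
    have hint01 : ∫ x in Set.Ioc (0:ℝ) 1, en n x = 0 := by
      rw [hinte 0 ⟨le_refl 0, zero_le_one⟩, hen0, sub_self, zero_div]
    -- pointwise expansion of the square
    have hexpand : ∀ x ∈ Set.Ioc (0:ℝ) 1, (Q n x - Q0 n)^2
        = Q0 n ^ 2 + ∫ t in Set.Ioc 0 x, 2 * g n t * (Q n t - Q0 n) := by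
      intro x hx
      have hxI : x ∈ Set.Icc (0:ℝ) 1 := ⟨hx.1.le, hx.2⟩
      have hgix : IntegrableOn (g n) (Set.Icc 0 x) :=
        (hgi n).mono_set (Set.Icc_subset_Icc le_rfl hx.2)
      have hgx : IntegrableOn (g n) (Set.Ioc 0 x) := hgix.mono_set Set.Ioc_subset_Icc_self
      have hsq := sq_integral_aux (g n) x hgix
      have hQu : ∀ t ∈ Set.Ioc (0:ℝ) x, Q n t = ∫ s in Set.Ioc (0:ℝ) t, g n s :=
        fun t ht => hQset n t ⟨ht.1.le, ht.2.trans hx.2⟩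
      have e1 : ∫ t in Set.Ioc 0 x, 2 * g n t * (Q n t - Q0 n)
          = ∫ t in Set.Ioc 0 x,
            (2 * (g n t * ∫ s in Set.Ioc (0:ℝ) t, g n s) - (2 * Q0 n) * g n t) :=
        setIntegral_congr_fun measurableSet_Ioc fun t ht => by rw [hQu t ht]; ring
      have hgu_int : IntegrableOn
          (fun t => g n t * ∫ s in Set.Ioc (0:ℝ) t, g n s) (Set.Ioc 0 x) :=
        (hgix.mul_continuousOn (intervalIntegral.continuousOn_primitive hgix)
          isCompact_Icc).mono_set Set.Ioc_subset_Icc_self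
      rw [e1, integral_sub (hgu_int.const_mul 2) (hgx.const_mul (2 * Q0 n)),
        integral_const_mul, integral_const_mul, hQset n x hxI]
      linear_combination hsq
    rw [intervalIntegral.integral_of_le zero_le_one]
    have hsplit : ∫ x in Set.Ioc (0:ℝ) 1, (Q n x - Q0 n)^2 * en n x
        = ∫ x in Set.Ioc (0:ℝ) 1, (Q0 n ^ 2 * en n x
            + en n x * ∫ t in Set.Ioc 0 x, 2 * g n t * (Q n t - Q0 n)) :=
      setIntegral_congr_fun measurableSet_Ioc fun x hx => by rw [hexpand x hx]; ring
    have hP_cont : ContinuousOn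
        (fun x => ∫ t in Set.Ioc (0:ℝ) x, 2 * g n t * (Q n t - Q0 n)) (Set.Icc 0 1) :=
      intervalIntegral.continuousOn_primitive (hhi n)
    have i1 : IntegrableOn (fun x => Q0 n ^ 2 * en n x) (Set.Ioc (0:ℝ) 1) :=
      (continuous_const.mul (hencont n)).integrableOn_Ioc
    have i2 : IntegrableOn
        (fun x => en n x * ∫ t in Set.Ioc (0:ℝ) x, 2 * g n t * (Q n t - Q0 n))
        (Set.Ioc (0:ℝ) 1) :=
      (IntegrableOn.mul_continuousOn (hencont n).integrableOn_Icc hP_cont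
        isCompact_Icc).mono_set Set.Ioc_subset_Icc_self
    rw [hsplit, integral_add i1 i2, integral_const_mul, hint01, mul_zero, zero_add]
    rw [triangle_swap (fun t => 2 * g n t * (Q n t - Q0 n)) (en n) 0 1
      ((hhi n).mono_set Set.Ioc_subset_Icc_self) (hencont n).integrableOn_Ioc]
    have e2 : ∫ t in Set.Ioc (0:ℝ) 1,
        (2 * g n t * (Q n t - Q0 n)) * ∫ x in Set.Ioc t 1, en n x
        = ∫ t in Set.Ioc (0:ℝ) 1, (2 * g n t * (Q n t - Q0 n) * (1 - en n t)) * c⁻¹ :=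
      setIntegral_congr_fun measurableSet_Ioc fun t ht => by
        rw [hinte t ⟨ht.1.le, ht.2⟩, div_eq_mul_inv]; ring
    rw [e2, integral_mul_const]
    have hKc : ((n:ℕ):ℂ) * c⁻¹ = K := by
      rw [hc, hK]
      push_cast
      field_simp
    rw [← hKc]
    ring
  -- limit of J
  have hnormprod : ∀ (n : ℕ) (t : ℝ), ‖2 * g n t * (Q n t - Q0 n) * (1 - en n t)‖
      = 2 * ‖g n t‖ * ‖Q n t - Q0 n‖ * ‖1 - en n t‖ := by
    intro n t
    rw [norm_mul, norm_mul, norm_mul]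
    norm_num
  have hQQ0b : ∀ (n : ℕ), ∀ t ∈ Set.Icc (0:ℝ) 1, ‖Q n t - Q0 n‖ ≤ 4 * C := by
    intro n t ht
    calc ‖Q n t - Q0 n‖ ≤ ‖Q n t‖ + ‖Q0 n‖ := norm_sub_le _ _
      _ ≤ 2 * C + 2 * C := add_le_add (hQb n t ht) (hQ0b n)
      _ = 4 * C := by ring
  have hene : ∀ (n : ℕ) (t : ℝ), ‖1 - en n t‖ ≤ 2 := by
    intro n t
    calc ‖1 - en n t‖ ≤ ‖(1:ℂ)‖ + ‖en n t‖ := norm_sub_le _ _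
      _ = 2 := by rw [norm_one, hennorm]; norm_num
  have hJ : Tendsto (fun n : ℕ =>
      ∫ t in Set.Ioc (0:ℝ) 1, 2 * g n t * (Q n t - Q0 n) * (1 - en n t)) atTop (nhds 0) := by
    rw [show (0:ℂ) = ∫ _ in Set.Ioc (0:ℝ) 1, (0:ℂ) by simp]
    apply tendsto_integral_filter_of_dominated_convergence
      (fun t => 2 * (|q t| + C) * (4 * C) * 2)
    · exact Eventually.of_forall fun n =>
        Integrable.aestronglyMeasurable ((hJint n).mono_set Set.Ioc_subset_Icc_self)
    · refine Eventually.of_forall fun n =>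
        (ae_restrict_mem measurableSet_Ioc).mono fun t ht => ?_
      have htI : t ∈ Set.Icc (0:ℝ) 1 := ⟨ht.1.le, ht.2⟩
      rw [hnormprod n t]
      have h1 := hgb n t
      have h2 := hQQ0b n t htI
      have h3 := hene n t
      have h4 := norm_nonneg (g n t)
      have h5 := norm_nonneg (Q n t - Q0 n)
      have h6 := norm_nonneg (1 - en n t)
      have h7 := abs_nonneg (q t)
      have hstep : 2 * ‖g n t‖ * ‖Q n t - Q0 n‖ ≤ 2 * (|q t| + C) * (4 * C) :=
        mul_le_mul (by linarith) h2 h5 (by linarith)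
      exact mul_le_mul hstep h3 h6
        (mul_nonneg (by linarith) (by linarith))
    · exact (((hqIoc.add hCi).const_mul 2).mul_const (4 * C)).mul_const 2
    · refine (ae_restrict_mem measurableSet_Ioc).mono fun t ht => ?_
      have htI : t ∈ Set.Icc (0:ℝ) 1 := ⟨ht.1.le, ht.2⟩
      have hQQ0 : Tendsto (fun n : ℕ => Q n t - Q0 n) atTop (nhds 0) := by
        simpa using (hQlim t htI).sub hQ0lim
      have hn0 : Tendsto (fun n : ℕ => 2 * (|q t| + C) * 2 * ‖Q n t - Q0 n‖) atTop (nhds 0) := by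
        have hnrm : Tendsto (fun n : ℕ => ‖Q n t - Q0 n‖) atTop (nhds 0) := by
          simpa using hQQ0.norm
        simpa using hnrm.const_mul (2 * (|q t| + C) * 2)
      apply squeeze_zero_norm _ hn0
      intro n
      rw [hnormprod n t]
      have h1 := hgb n t
      have h3 := hene n t
      have h4 := norm_nonneg (g n t)
      have h5 := norm_nonneg (Q n t - Q0 n)
      have h6 := norm_nonneg (1 - en n t)
      have h7 := abs_nonneg (q t)
      have hstep : 2 * ‖g n t‖ * ‖1 - en n t‖ ≤ 2 * (|q t| + C) * 2 :=
        mul_le_mul (by linarith) h3 h6 (by linarith)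
      calc 2 * ‖g n t‖ * ‖Q n t - Q0 n‖ * ‖1 - en n t‖
          = (2 * ‖g n t‖ * ‖1 - en n t‖) * ‖Q n t - Q0 n‖ := by ring
        _ ≤ (2 * (|q t| + C) * 2) * ‖Q n t - Q0 n‖ :=
            mul_le_mul_of_nonneg_right hstep h5
  have hfinal := (hJ.const_mul K)
  rw [mul_zero] at hfinal
  refine Tendsto.congr' ?_ hfinal
  filter_upwards [eventually_ge_atTop 1] with n hn
  exact (key n hn).symm
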